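/- Let A,B>0, an equilibrium ρ*≥0, a feedback parameter k∈[0,1), R>0 and a bounded measurement error d:[0,∞)→ℝ be given. Set θ=ρ*/(B+ρ*) and C₁(β)=(e^β−1)/β. Assume there exists β>0 such that e^{−β}>2k, θ(e^{−β}−2k)C₁(β)/(1−k)<1, and β − θ²C₁(β)[(2−e^{−β}) + ((2k−e^{−β})/(1−k))²] > 0. Let ρ∈C¹([0,∞)×[0,1]) be a nonnegative classical solution of ∂_tρ(t,x)+λ(W(t))∂_xρ(t,x)=0 with λ(s)=A/(B+s), W(t)=∫₀¹ρ(t,x)dx, satisfying the feedback boundary condition ρ(t,0)λ(W(t)) = ρ*λ(ρ*) + k((ρ(t,1)+d(t))λ(W(t)) − ρ*λ(ρ*)) for all t>0 and the initial bound ‖ρ(0,·)−ρ*‖_{L²(0,1)} ≤ R. Then there exist positive constants γ₁,γ₂,γ₃ (depending only on A,B,ρ*,k,β,R and sup_{t≥0}|d(t)|) such that for all t≥0: ‖ρ(t,·)−ρ*‖_{L²(0,1)} ≤ γ₂e^{−γ₁t}‖ρ(0,·)−ρ*‖_{L²(0,1)} + γ₃·sup_{s∈[0,t]}|d(s)|.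 -/

import Mathlib

open Real Set MeasureTheory Topology Filter

lemma aux_sq_split (s x y : ℝ) (hs : 0 < s) : (x + y)^2 ≤ (1+s)*x^2 + (1+1/s)*y^2 := by
  have h : s*(x+y)^2 ≤ s*((1+s)*x^2) + (s+1)*y^2 := by nlinarith [sq_nonneg (s*x - y)]
  have h2 : (x+y)^2 ≤ (s*((1+s)*x^2) + (s+1)*y^2)/s := (le_div_iff₀ hs).mpr (by linarith)
  have h3 : (s*((1+s)*x^2) + (s+1)*y^2)/s = (1+s)*x^2 + (1+1/s)*y^2 := by
    field_simp
  linarith [h3 ▸ h2]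

lemma aux_sqrt_add (x y : ℝ) (hx : 0 ≤ x) (hy : 0 ≤ y) :
    Real.sqrt (x+y) ≤ Real.sqrt x + Real.sqrt y := by
  rw [show x + y = Real.sqrt x ^2 + Real.sqrt y ^2 by rw [Real.sq_sqrt hx, Real.sq_sqrt hy]]
  have h1 : Real.sqrt x ^ 2 + Real.sqrt y ^2 ≤ (Real.sqrt x + Real.sqrt y)^2 := by
    nlinarith [Real.sqrt_nonneg x, Real.sqrt_nonneg y]
  calc Real.sqrt (Real.sqrt x ^2 + Real.sqrt y ^2) ≤ Real.sqrt ((Real.sqrt x + Real.sqrt y)^2) :=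
        Real.sqrt_le_sqrt h1
    _ = Real.sqrt x + Real.sqrt y := Real.sqrt_sq (by positivity)

lemma aux_barrier (f f' : ℝ → ℝ) (hc : ContinuousOn f (Ici 0))
    (hd : ∀ t > (0:ℝ), HasDerivAt f (f' t) t) (VM : ℝ) (h0 : f 0 ≤ VM)
    (hneg : ∀ t > (0:ℝ), VM < f t → f' t ≤ 0) : ∀ t ≥ (0:ℝ), f t ≤ VM := by
  intro t0 ht0
  by_contra hlt
  push_neg at hlt
  have ht0' : 0 < t0 := by
    rcases ht0.lt_or_eq with h | h
    · exact h
    · exfalso; rw [← h] at hlt; linarith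
  have hne : ({s | s ∈ Icc 0 t0 ∧ f s ≤ VM} : Set ℝ).Nonempty := ⟨0, ⟨le_refl _, ht0⟩, h0⟩
  have hbdd : BddAbove ({s | s ∈ Icc 0 t0 ∧ f s ≤ VM} : Set ℝ) := ⟨t0, fun s hs => hs.1.2⟩
  have hclosed : IsClosed ({s | s ∈ Icc 0 t0 ∧ f s ≤ VM} : Set ℝ) := by
    have heq : ({s | s ∈ Icc 0 t0 ∧ f s ≤ VM} : Set ℝ) = Icc 0 t0 ∩ f ⁻¹' (Iic VM) := by
      ext s; exact Iff.rfl
    rw [heq]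
    exact (hc.mono Icc_subset_Ici_self).preimage_isClosed_of_isClosed isClosed_Icc isClosed_Iic
  have hTex : ∃ T, (0 ≤ T ∧ T ≤ t0 ∧ f T ≤ VM) ∧
      ∀ s, T < s → s ≤ t0 → ¬ (f s ≤ VM) := by
    refine ⟨sSup ({s | s ∈ Icc 0 t0 ∧ f s ≤ VM} : Set ℝ), ?_, ?_⟩
    · have hTmem := hclosed.csSup_mem hne hbdd
      exact ⟨hTmem.1.1, hTmem.1.2, hTmem.2⟩
    · intro s hs1 hs2 hle
      have hs0 : 0 ≤ s := (hclosed.csSup_mem hne hbdd).1.1.trans hs1.le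
      exact absurd (le_csSup hbdd ⟨⟨hs0, hs2⟩, hle⟩) (not_le.mpr hs1)
  obtain ⟨T, ⟨hT0, hTle, hTf⟩, hgt'⟩ := hTex
  have hTt0 : T < t0 := lt_of_le_of_ne hTle (by rintro rfl; exact absurd hTf (not_le.mpr hlt))
  have hgt : ∀ s ∈ Ioc T t0, VM < f s := fun s hs => not_le.mp (hgt' s hs.1 hs.2)
  have hanti : AntitoneOn f (Icc T t0) := by
    refine antitoneOn_of_deriv_nonpos (convex_Icc _ _) (hc.mono ?_) ?_ ?_
    · exact fun s hs => hT0.trans hs.1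
    · intro s hs
      rw [interior_Icc] at hs
      exact ((hd s (hT0.trans_lt hs.1)).differentiableAt).differentiableWithinAt
    · intro s hs
      rw [interior_Icc] at hs
      rw [(hd s (hT0.trans_lt hs.1)).deriv]
      exact hneg s (hT0.trans_lt hs.1) (hgt s ⟨hs.1, hs.2.le⟩)
  have := hanti ⟨le_refl T, hTt0.le⟩ ⟨hTt0.le, le_refl t0⟩ hTt0.le
  exact absurd (this.trans hTf) (not_le.mpr hlt)

lemma aux_gronwall (f f' : ℝ → ℝ) (a K t : ℝ) (ha : 0 < a) (hK : 0 ≤ K) (ht : 0 ≤ t)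
    (hc : ContinuousOn f (Icc 0 t)) (hd : ∀ s, 0 < s → s < t → HasDerivAt f (f' s) s)
    (hineq : ∀ s, 0 < s → s < t → f' s ≤ -a * f s + a * K) :
    f t ≤ f 0 * Real.exp (-(a*t)) + K := by
  have hganti : AntitoneOn (fun s => (f s - K) * Real.exp (a*s)) (Icc 0 t) := by
    refine antitoneOn_of_deriv_nonpos (convex_Icc _ _) ?_ ?_ ?_
    · exact (hc.sub continuousOn_const).mul
        ((Real.continuous_exp.comp (continuous_const.mul continuous_id')).continuousOn)
    · intro s hs
      rw [interior_Icc] at hs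
      have hds : HasDerivAt (fun s => (f s - K) * Real.exp (a*s))
          (f' s * Real.exp (a*s) + (f s - K) * (Real.exp (a*s) * (a*1))) s :=
        ((hd s hs.1 hs.2).sub_const K).mul (((hasDerivAt_id s).const_mul a).exp)
      exact hds.differentiableAt.differentiableWithinAt
    · intro s hs
      rw [interior_Icc] at hs
      have hds : HasDerivAt (fun s => (f s - K) * Real.exp (a*s))
          (f' s * Real.exp (a*s) + (f s - K) * (Real.exp (a*s) * (a*1))) s :=
        ((hd s hs.1 hs.2).sub_const K).mul (((hasDerivAt_id s).const_mul a).exp)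
      rw [hds.deriv]
      have h1 := hineq s hs.1 hs.2
      have h2 := Real.exp_pos (a*s)
      nlinarith
  have h := hganti ⟨le_refl 0, ht⟩ ⟨ht, le_refl t⟩ ht
  simp only [mul_zero, Real.exp_zero, mul_one] at h
  have hexp : Real.exp (a*t) * Real.exp (-(a*t)) = 1 := by rw [← Real.exp_add]; simp
  have hexpos2 := Real.exp_pos (-(a*t))
  have h2 : f t - K ≤ (f 0 - K) * Real.exp (-(a*t)) := by
    calc f t - K = ((f t - K) * Real.exp (a*t)) * Real.exp (-(a*t)) := by
          rw [mul_assoc, hexp, mul_one]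
      _ ≤ (f 0 - K) * Real.exp (-(a*t)) := mul_le_mul_of_nonneg_right h hexpos2.le
  have hexp1 : Real.exp (-(a*t)) ≤ 1 := Real.exp_le_one_iff.mpr (by nlinarith)
  nlinarith [mul_nonneg hK hexpos2.le]

lemma aux_kE (E k : ℝ) (hEpos : 0 < E) (hk0 : 0 ≤ k) (hk1 : k < 1) (hβ1 : 2*k < E) :
    k^2 < E := by nlinarith [mul_nonneg hk0 (sub_nonneg.mpr hk1.le)]

lemma aux_Plt (E k θ C₁ β : ℝ) (hEpos : 0 < E) (hE1 : E < 1) (hk0 : 0 ≤ k)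
    (hβ1 : 2*k < E) (hkE : k^2 < E) (hC₁ : 0 < C₁)
    (hβ3 : 0 < β - θ^2*C₁*((2-E) + ((2*k-E)/(1-k))^2)) :
    E/(E-k^2) * (1-k)^2 * (θ^2*C₁) < β := by
  have ha0 : 0 < E - k^2 := by linarith
  have hkE' : k ≤ E := by linarith
  have key1 : E/(E-k^2) * (1-k)^2 ≤ 2 - E := by
    rw [div_mul_eq_mul_div, div_le_iff₀ ha0]
    nlinarith [mul_nonneg hk0 (sub_nonneg.mpr hkE'), mul_pos hEpos (sub_pos.mpr hE1)]
  have key2 : θ^2*C₁*(2-E) < β := by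
    nlinarith [sq_nonneg ((2*k - E)/(1-k)),
      mul_nonneg (mul_nonneg (sq_nonneg θ) hC₁.le) (sq_nonneg ((2*k - E)/(1-k)))]
  nlinarith [mul_le_mul_of_nonneg_right key1 (mul_nonneg (sq_nonneg θ) hC₁.le)]

lemma aux_split (P β sε c : ℝ) (hPnn : 0 ≤ P) (hs : 0 < sε)
    (hsP : sε*(2*(P+1)) = β - P) (hc : c = (β-P)/2) : (1+sε)*P ≤ β - c := by
  rw [hc]; nlinarith [mul_nonneg hs.le hPnn]

lemma aux_quadmax (E k u1 c0 : ℝ) (hEpos : 0 < E) (hkE : k^2 < E) :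
    (k*u1 + c0)^2 - E*u1^2 ≤ E/(E-k^2) * c0^2 := by
  have ha0 : 0 < E - k^2 := by linarith
  rw [div_mul_eq_mul_div, le_div_iff₀ ha0]
  nlinarith [sq_nonneg ((E-k^2)*u1 - k*c0)]

lemma aux_sq_le_sq (x M : ℝ) (h : |x| ≤ M) : x^2 ≤ M^2 := by
  nlinarith [abs_nonneg x, sq_abs x]

lemma aux_barrier_cond (c C M R V dsq : ℝ) (hc : 0 < c) (hC : 0 < C) (hM : 0 ≤ M)
    (hd : dsq ≤ M^2) (hV : R^2 + C*M^2/c < V) : -c*V + C*dsq ≤ 0 := by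
  have h1 : C*M^2/c * c = C*M^2 := div_mul_cancel₀ _ hc.ne'
  nlinarith [sq_nonneg R, mul_pos hC (mul_pos hc hc)]

/-- integrand of the weighted Lyapunov functional -/
lemma aux_bdry (E k θ C₁ β sε P c C u1 w dt V : ℝ)
    (hEpos : 0 < E) (hkE : k^2 < E) (hs : 0 < sε) (hV : 0 ≤ V)
    (hCS : w^2 ≤ C₁ * V)
    (hθw : 0 ≤ (1-k)^2*θ^2)
    (hP : P = E/(E-k^2) * (1-k)^2 * (θ^2*C₁))
    (hsplit : (1+sε)*P ≤ β - c)
    (hC : E/(E-k^2)*(1+1/sε)*k^2 = C - 1) :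
    (k*u1 + ((1-k)*θ*w + k*dt))^2 - E*u1^2 ≤ (β - c)*V + C*dt^2 := by
  have hκnn : 0 ≤ E/(E-k^2) := div_nonneg hEpos.le (by linarith)
  have h2 := aux_quadmax E k u1 ((1-k)*θ*w + k*dt) hEpos hkE
  have h4 : ((1-k)*θ*w)^2 ≤ (1-k)^2*θ^2*(C₁*V) := by
    calc ((1-k)*θ*w)^2 = (1-k)^2*θ^2*w^2 := by ring
      _ ≤ (1-k)^2*θ^2*(C₁*V) := mul_le_mul_of_nonneg_left hCS hθw
  have h6 : ((1-k)*θ*w + k*dt)^2 ≤ (1+sε)*((1-k)^2*θ^2*(C₁*V)) + (1+1/sε)*(k*dt)^2 := by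
    have h3 := aux_sq_split sε ((1-k)*θ*w) (k*dt) hs
    have := mul_le_mul_of_nonneg_left h4 (by linarith : (0:ℝ) ≤ 1+sε)
    linarith
  have h5 : (k*u1 + ((1-k)*θ*w + k*dt))^2 - E*u1^2
      ≤ E/(E-k^2)*((1+sε)*((1-k)^2*θ^2*(C₁*V)) + (1+1/sε)*(k*dt)^2) :=
    h2.trans (mul_le_mul_of_nonneg_left h6 hκnn)
  have h7 : E/(E-k^2)*((1+sε)*((1-k)^2*θ^2*(C₁*V)) + (1+1/sε)*(k*dt)^2)
      = (1+sε)*P*V + (C-1)*dt^2 := by rw [hP, ← hC]; ring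
  have h8 : (1+sε)*P*V ≤ (β-c)*V := mul_le_mul_of_nonneg_right hsplit hV
  nlinarith [sq_nonneg dt]

noncomputable def issFn (β ρs : ℝ) (ρ : ℝ → ℝ → ℝ) (t x : ℝ) : ℝ :=
  Real.exp (-(β*x)) * (ρ t x - ρs)^2

set_option maxHeartbeats 1000000 in
/-- ISS in L² for the closed-loop scalar conservation law with nonlocal
velocity `λ(s) = A/(B+s)` and measurement error `d`. -/
theorem iss_nonlocal_conservation_law
    (A B ρs k R : ℝ) (d : ℝ → ℝ) (ρ : ℝ → ℝ → ℝ) (W : ℝ → ℝ) (θ : ℝ)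
    (hA : 0 < A) (hB : 0 < B) (hρs : 0 ≤ ρs) (hk0 : 0 ≤ k) (hk1 : k < 1) (hR : 0 < R)
    (hdbdd : ∃ M : ℝ, ∀ t, 0 ≤ t → |d t| ≤ M)
    (hθ : θ = ρs / (B + ρs))
    (hβ : ∃ β > (0:ℝ),
      2 * k < Real.exp (-β) ∧
      θ * (Real.exp (-β) - 2 * k) * ((Real.exp β - 1) / β) / (1 - k) < 1 ∧
      0 < β - θ ^ 2 * ((Real.exp β - 1) / β) *
        ((2 - Real.exp (-β)) + ((2 * k - Real.exp (-β)) / (1 - k)) ^ 2))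
    (hreg : ContDiffOn ℝ 1 (fun p : ℝ × ℝ => ρ p.1 p.2) (Ici (0:ℝ) ×ˢ Icc (0:ℝ) 1))
    (hpos : ∀ t ∈ Ici (0:ℝ), ∀ x ∈ Icc (0:ℝ) 1, 0 ≤ ρ t x)
    (hW : ∀ t, W t = ∫ x in (0:ℝ)..1, ρ t x)
    (hpde : ∀ t > (0:ℝ), ∀ x ∈ Ioo (0:ℝ) 1,
      deriv (fun s => ρ s x) t + (A / (B + W t)) * deriv (fun y => ρ t y) x = 0)
    (hbc : ∀ t > (0:ℝ),
      ρ t 0 * (A / (B + W t)) =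
        ρs * (A / (B + ρs)) +
          k * ((ρ t 1 + d t) * (A / (B + W t)) - ρs * (A / (B + ρs))))
    (hinit : Real.sqrt (∫ x in (0:ℝ)..1, (ρ 0 x - ρs) ^ 2) ≤ R) :
    ∃ γ₁ > (0:ℝ), ∃ γ₂ > (0:ℝ), ∃ γ₃ > (0:ℝ), ∀ t ≥ (0:ℝ),
      Real.sqrt (∫ x in (0:ℝ)..1, (ρ t x - ρs) ^ 2) ≤
        γ₂ * Real.exp (-γ₁ * t) * Real.sqrt (∫ x in (0:ℝ)..1, (ρ 0 x - ρs) ^ 2) +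
        γ₃ * sSup ((fun s => |d s|) '' Icc (0:ℝ) t) := by
  classical
  obtain ⟨β, hβpos, hβ1, hβ2, hβ3⟩ := hβ
  obtain ⟨M0, hM0⟩ := hdbdd
  set M := max M0 0 with hMdef
  have hMnn : 0 ≤ M := le_max_right _ _
  have hMd : ∀ t, 0 ≤ t → |d t| ≤ M := fun t ht => (hM0 t ht).trans (le_max_left _ _)
  -- constants
  set E := Real.exp (-β) with hE
  have hEpos : 0 < E := by rw [hE]; exact Real.exp_pos _
  have hE1 : E < 1 := by rw [hE, Real.exp_lt_one_iff]; linarith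
  set C₁ := (Real.exp β - 1)/β with hC₁def
  have hexpβ : 1 < Real.exp β := by
    rw [show (1:ℝ) = Real.exp 0 by simp]
    exact Real.exp_lt_exp.mpr hβpos
  have hC₁pos : 0 < C₁ := by rw [hC₁def]; exact div_pos (by linarith) hβpos
  clear_value E C₁
  have hkE : k^2 < E := aux_kE E k hEpos hk0 hk1 hβ1
  have ha0 : 0 < E - k^2 := by linarith
  set κ := E / (E - k^2) with hκdef
  have hκpos : 0 < κ := by rw [hκdef]; exact div_pos hEpos ha0
  clear_value κ
  have hBρ : 0 < B + ρs := by linarith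
  have hθnn : 0 ≤ θ := hθ ▸ div_nonneg hρs hBρ.le
  set P := κ * (1-k)^2 * (θ^2 * C₁) with hPdef
  have hPnn : 0 ≤ P := by
    rw [hPdef]
    exact mul_nonneg (mul_nonneg hκpos.le (sq_nonneg _))
      (mul_nonneg (sq_nonneg θ) hC₁pos.le)
  clear_value P
  have hPβ : P < β := by
    rw [hPdef, hκdef]
    exact aux_Plt E k θ C₁ β hEpos hE1 hk0 hβ1 hkE hC₁pos hβ3
  set c := (β - P)/2 with hcdef
  have hcpos : 0 < c := by rw [hcdef]; linarith
  clear_value c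
  set sε := (β - P)/(2*(P+1)) with hsdef
  have hspos : 0 < sε := by
    rw [hsdef]
    exact div_pos (by linarith) (by linarith)
  have hsP : sε * (2*(P+1)) = β - P := by
    rw [hsdef]
    exact div_mul_cancel₀ _ (by linarith : (2*(P+1) : ℝ) ≠ 0)
  clear_value sε
  have hsplitP : (1+sε)*P ≤ β - c := aux_split P β sε c hPnn hspos hsP hcdef
  set C := κ*(1+1/sε)*k^2 + 1 with hCdef
  have hCk : κ*(1+1/sε)*k^2 = C - 1 := by rw [hCdef]; ring
  have hCpos : 0 < C := by
    rw [hCdef]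
    have h0 : 0 < 1/sε := one_div_pos.mpr hspos
    have h1 : 0 ≤ κ*(1+1/sε)*k^2 :=
      mul_nonneg (mul_nonneg hκpos.le (by linarith)) (sq_nonneg k)
    linarith
  clear_value C
  -- geometry
  have huIcc : uIcc (0:ℝ) 1 = Icc 0 1 := uIcc_of_le zero_le_one
  have huIoc : Set.uIoc (0:ℝ) 1 = Ioc 0 1 := uIoc_of_le zero_le_one
  have hsubI : Set.uIoc (0:ℝ) 1 ⊆ Icc 0 1 := by rw [huIoc]; exact Ioc_subset_Icc_self
  set S : Set (ℝ×ℝ) := Ici (0:ℝ) ×ˢ Icc (0:ℝ) 1 with hSdef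
  have hSU : UniqueDiffOn ℝ S := (uniqueDiffOn_Ici 0).prod (uniqueDiffOn_Icc one_pos)
  set gt' : ℝ×ℝ → ℝ := fun p => fderivWithin ℝ (fun p : ℝ×ℝ => ρ p.1 p.2) S p (1,0) with hgt'
  set gx' : ℝ×ℝ → ℝ := fun p => fderivWithin ℝ (fun p : ℝ×ℝ => ρ p.1 p.2) S p (0,1) with hgx'
  have hDfc : ContinuousOn (fderivWithin ℝ (fun p : ℝ×ℝ => ρ p.1 p.2) S) S :=
    hreg.continuousOn_fderivWithin hSU le_rfl
  have hgtc : ContinuousOn gt' S := hDfc.clm_apply continuousOn_const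
  have hgxc : ContinuousOn gx' S := hDfc.clm_apply continuousOn_const
  have hρc : ContinuousOn (fun p : ℝ×ℝ => ρ p.1 p.2) S := hreg.continuousOn
  have hslice_t : ∀ t > (0:ℝ), ∀ x ∈ Icc (0:ℝ) 1,
      HasDerivAt (fun s => ρ s x) (gt' (t,x)) t := by
    intro t ht x hx
    have hmem : ((t,x) : ℝ×ℝ) ∈ S := ⟨le_of_lt ht, hx⟩
    have hd := (hreg.differentiableOn one_ne_zero) (t,x) hmem
    have hL : HasDerivWithinAt (fun s : ℝ => ((s, x) : ℝ×ℝ)) ((1:ℝ), (0:ℝ)) (Ioi 0) t :=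
      ((hasDerivAt_id t).prodMk (hasDerivAt_const t x)).hasDerivWithinAt
    have hcomp := hd.hasFDerivWithinAt.comp_hasDerivWithinAt t hL
      (fun s (hs : s ∈ Ioi (0:ℝ)) => (⟨mem_Ici.mpr (le_of_lt hs), hx⟩ : ((s, x) : ℝ×ℝ) ∈ S))
    exact hcomp.hasDerivAt (Ioi_mem_nhds ht)
  have hslice_xw : ∀ t ∈ Ici (0:ℝ), ∀ x ∈ Icc (0:ℝ) 1,
      HasDerivWithinAt (fun y => ρ t y) (gx' (t,x)) (Icc 0 1) x := by
    intro t ht x hx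
    have hmem : ((t,x) : ℝ×ℝ) ∈ S := ⟨ht, hx⟩
    have hd := (hreg.differentiableOn one_ne_zero) (t,x) hmem
    have hL : HasDerivWithinAt (fun y : ℝ => ((t, y) : ℝ×ℝ)) ((0:ℝ), (1:ℝ)) (Icc 0 1) x :=
      ((hasDerivAt_const x t).prodMk (hasDerivAt_id x)).hasDerivWithinAt
    exact hd.hasFDerivWithinAt.comp_hasDerivWithinAt x hL (fun y hy => ⟨ht, hy⟩)
  have hslice_x : ∀ t > (0:ℝ), ∀ x ∈ Ioo (0:ℝ) 1,
      HasDerivAt (fun y => ρ t y) (gx' (t,x)) x := fun t ht x hx =>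
    (hslice_xw t (le_of_lt ht) x (Ioo_subset_Icc_self hx)).hasDerivAt
      (Icc_mem_nhds hx.1 hx.2)
  have hρsl : ∀ t ∈ Ici (0:ℝ), ContinuousOn (fun x => ρ t x) (Icc 0 1) := by
    intro t ht
    exact hρc.comp ((continuous_const.prodMk continuous_id).continuousOn)
      (fun x hx => ⟨ht, hx⟩)
  have hgxsl : ∀ t ∈ Ici (0:ℝ), ContinuousOn (fun x => gx' (t,x)) (Icc 0 1) := by
    intro t ht
    exact hgxc.comp ((continuous_const.prodMk continuous_id).continuousOn)
      (fun x hx => ⟨ht, hx⟩)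
  have hgtsl : ∀ t ∈ Ici (0:ℝ), ContinuousOn (fun x => gt' (t,x)) (Icc 0 1) := by
    intro t ht
    exact hgtc.comp ((continuous_const.prodMk continuous_id).continuousOn)
      (fun x hx => ⟨ht, hx⟩)
  -- main integral quantities
  have hFn : ∀ t x : ℝ, issFn β ρs ρ t x = Real.exp (-(β*x)) * (ρ t x - ρs)^2 :=
    fun t x => rfl
  set V : ℝ → ℝ := fun t => ∫ x in (0:ℝ)..1, issFn β ρs ρ t x with hVdef
  set lam : ℝ → ℝ := fun t => A/(B + W t) with hlam
  have hexpc : Continuous (fun x : ℝ => Real.exp (-(β*x))) :=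
    Real.continuous_exp.comp ((continuous_const.mul continuous_id).neg)
  have hFncont : ∀ t ∈ Ici (0:ℝ), ContinuousOn (issFn β ρs ρ t) (Icc 0 1) := by
    intro t ht
    exact (hexpc.continuousOn).mul (((hρsl t ht).sub continuousOn_const).pow 2)
  have hFint : ∀ t ∈ Ici (0:ℝ), IntervalIntegrable (issFn β ρs ρ t) volume 0 1 := by
    intro t ht
    exact ((hFncont t ht).mono (le_of_eq huIcc)).intervalIntegrable
  have hρint : ∀ t ∈ Ici (0:ℝ), IntervalIntegrable (fun x => ρ t x) volume 0 1 := by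
    intro t ht
    exact ((hρsl t ht).mono (le_of_eq huIcc)).intervalIntegrable
  have husqint : ∀ t ∈ Ici (0:ℝ), IntervalIntegrable (fun x => (ρ t x - ρs)^2) volume 0 1 := by
    intro t ht
    exact ((((hρsl t ht).sub continuousOn_const).pow 2).mono (le_of_eq huIcc)).intervalIntegrable
  have husubint : ∀ t ∈ Ici (0:ℝ), IntervalIntegrable (fun x => ρ t x - ρs) volume 0 1 := by
    intro t ht
    exact (((hρsl t ht).sub continuousOn_const).mono (le_of_eq huIcc)).intervalIntegrable
  have hVnn : ∀ t, 0 ≤ V t := by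
    intro t
    exact intervalIntegral.integral_nonneg zero_le_one
      (fun x _ => by rw [hFn]; positivity)
  have hWnn : ∀ t ∈ Ici (0:ℝ), 0 ≤ W t := by
    intro t ht
    rw [hW t]
    exact intervalIntegral.integral_nonneg zero_le_one (fun x hx => hpos t ht x hx)
  have hBW : ∀ t ∈ Ici (0:ℝ), 0 < B + W t := fun t ht => by linarith [hWnn t ht]
  have hlampos : ∀ t ∈ Ici (0:ℝ), 0 < lam t := fun t ht => div_pos hA (hBW t ht)
  have hlamle : ∀ t ∈ Ici (0:ℝ), lam t ≤ A/B := by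
    intro t ht
    simp only [hlam]
    gcongr
    · linarith [hWnn t ht]
  have hws : ∀ t ∈ Ici (0:ℝ), W t - ρs = ∫ x in (0:ℝ)..1, (ρ t x - ρs) := by
    intro t ht
    rw [intervalIntegral.integral_sub (hρint t ht) intervalIntegrable_const,
      intervalIntegral.integral_const, hW t]
    simp
  have hIexp : (∫ x in (0:ℝ)..1, Real.exp (β*x)) = C₁ := by
    have hd : ∀ x ∈ uIcc (0:ℝ) 1, HasDerivAt (fun y => Real.exp (β*y)/β) (Real.exp (β*x)) x := by
      intro x _
      have h1 : HasDerivAt (fun y : ℝ => β*y) β x := by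
        simpa using (hasDerivAt_id x).const_mul β
      have h2 := (h1.exp).div_const β
      exact h2.congr_deriv (mul_div_cancel_right₀ _ hβpos.ne')
    rw [intervalIntegral.integral_eq_sub_of_hasDerivAt hd
      ((Real.continuous_exp.comp (continuous_const.mul continuous_id)).intervalIntegrable 0 1)]
    rw [hC₁def]
    norm_num
    ring
  have hCS : ∀ t ∈ Ici (0:ℝ), (W t - ρs)^2 ≤ C₁ * V t := by
    intro t ht
    set T := (W t - ρs)/C₁ with hT
    have hint1 : IntervalIntegrable (fun x => Real.exp (β*x)*T^2) volume 0 1 :=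
      Continuous.intervalIntegrable (by fun_prop) 0 1
    have hint2 : IntervalIntegrable (fun x => 2*T*(ρ t x - ρs)) volume 0 1 :=
      (husubint t ht).const_mul _
    have hint3 : IntervalIntegrable (fun x => Real.exp (-(β*x))*(ρ t x - ρs)^2) volume 0 1 := by
      have := hFint t ht
      exact this
    have hkey : (0:ℝ) ≤ ∫ x in (0:ℝ)..1,
        (Real.exp (β*x/2)*T - Real.exp (-(β*x)/2)*(ρ t x - ρs))^2 :=
      intervalIntegral.integral_nonneg zero_le_one (fun x _ => sq_nonneg _)
    have heq : ∀ x : ℝ, (Real.exp (β*x/2)*T - Real.exp (-(β*x)/2)*(ρ t x - ρs))^2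
        = Real.exp (β*x)*T^2 - 2*T*(ρ t x - ρs) + Real.exp (-(β*x))*(ρ t x - ρs)^2 := by
      intro x
      have e1 : Real.exp (β*x/2)*Real.exp (β*x/2) = Real.exp (β*x) := by
        rw [← Real.exp_add]; ring_nf
      have e2 : Real.exp (-(β*x)/2)*Real.exp (-(β*x)/2) = Real.exp (-(β*x)) := by
        rw [← Real.exp_add]; ring_nf
      have e3 : Real.exp (β*x/2)*Real.exp (-(β*x)/2) = 1 := by
        rw [← Real.exp_add, show β*x/2 + -(β*x)/2 = 0 by ring, Real.exp_zero]
      linear_combination T^2 * e1 + (ρ t x - ρs)^2 * e2 - 2*T*(ρ t x - ρs)*e3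
    rw [intervalIntegral.integral_congr (g := fun x => Real.exp (β*x)*T^2
        - 2*T*(ρ t x - ρs) + Real.exp (-(β*x))*(ρ t x - ρs)^2) (fun x _ => heq x)] at hkey
    rw [intervalIntegral.integral_add (hint1.sub hint2) hint3,
      intervalIntegral.integral_sub hint1 hint2,
      intervalIntegral.integral_mul_const, hIexp,
      intervalIntegral.integral_const_mul, ← hws t ht] at hkey
    have hVt : V t = ∫ x in (0:ℝ)..1, Real.exp (-(β*x))*(ρ t x - ρs)^2 := by
      simp only [hVdef, hFn]
    rw [← hVt] at hkey
    have hTT : C₁*T^2 - 2*T*(W t - ρs) = -((W t - ρs)^2/C₁) := by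
      rw [hT]; field_simp; ring
    rw [hTT] at hkey
    have hkey2 : (W t - ρs)^2/C₁ ≤ V t := by linarith
    have h9 := (div_le_iff₀ hC₁pos).mp hkey2
    rw [mul_comm]
    exact h9
  have hFS : ContinuousOn (fun p : ℝ×ℝ => issFn β ρs ρ p.1 p.2) S := by
    simp only [hFn]
    exact ((Real.continuous_exp.comp ((continuous_const.mul continuous_snd).neg)).continuousOn).mul
      ((hρc.sub continuousOn_const).pow 2)
  have hVcont : ContinuousOn V (Ici 0) := by
    intro t0 ht0
    have hKc : IsCompact (Icc (0:ℝ) (t0+1) ×ˢ Icc (0:ℝ) 1) := isCompact_Icc.prod isCompact_Icc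
    have hKsub : (Icc (0:ℝ) (t0+1) ×ˢ Icc (0:ℝ) 1) ⊆ S := by
      rw [hSdef]; exact prod_mono Icc_subset_Ici_self subset_rfl
    obtain ⟨Cb, hCb⟩ := hKc.exists_bound_of_continuousOn (hFS.mono hKsub)
    show ContinuousWithinAt (fun t => ∫ x in (0:ℝ)..1, issFn β ρs ρ t x) (Ici 0) t0
    apply intervalIntegral.continuousWithinAt_of_dominated_interval
      (F := issFn β ρs ρ) (bound := fun _ => Cb) ?_ ?_ intervalIntegrable_const ?_
    · filter_upwards [self_mem_nhdsWithin] with s hs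
      exact ((hFncont s hs).mono hsubI).aestronglyMeasurable measurableSet_uIoc
    · have hball : Metric.ball t0 1 ∩ Ici 0 ∈ 𝓝[Ici (0:ℝ)] t0 :=
        inter_mem (mem_nhdsWithin_of_mem_nhds (Metric.ball_mem_nhds _ one_pos))
          self_mem_nhdsWithin
      filter_upwards [hball] with s hs
      apply ae_of_all
      intro x hx
      have hd1 := abs_lt.mp ((Real.dist_eq _ _) ▸ Metric.mem_ball.mp hs.1)
      have h1 : s ∈ Icc 0 (t0+1) := ⟨hs.2, by linarith [hd1.2]⟩
      exact hCb (s, x) ⟨h1, hsubI hx⟩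
    · apply ae_of_all
      intro x hx
      have h1 : ContinuousOn (fun s => issFn β ρs ρ s x) (Ici 0) :=
        ContinuousOn.comp (g := fun p : ℝ×ℝ => issFn β ρs ρ p.1 p.2)
          (f := fun s : ℝ => ((s, x) : ℝ×ℝ)) (t := S) hFS
          ((continuous_id.prodMk continuous_const).continuousOn)
          (fun s hs => ⟨hs, hsubI hx⟩)
      exact h1 t0 ht0
  set DV : ℝ → ℝ := fun t => ∫ x in (0:ℝ)..1,
    Real.exp (-(β*x)) * (2*(ρ t x - ρs)^1 * gt' (t,x)) with hDVdef
  have hVderiv : ∀ t > (0:ℝ), HasDerivAt V (DV t) t := by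
    intro t0 ht0
    set ε := min (t0/2) 1 with hε
    have hεpos : 0 < ε := lt_min (by linarith) one_pos
    have hεle1 : ε ≤ t0/2 := min_le_left _ _
    have hεle2 : ε ≤ 1 := min_le_right _ _
    have hball : ∀ s ∈ Metric.ball t0 ε, s ∈ Icc (t0/2) (t0+1) ∧ 0 < s := by
      intro s hs
      have h1 := abs_lt.mp ((Real.dist_eq _ _) ▸ Metric.mem_ball.mp hs)
      exact ⟨⟨by linarith [h1.1], by linarith [h1.2]⟩, by linarith [h1.1]⟩
    have hKc : IsCompact (Icc (t0/2) (t0+1) ×ˢ Icc (0:ℝ) 1) := isCompact_Icc.prod isCompact_Icc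
    have hKsub : (Icc (t0/2) (t0+1) ×ˢ Icc (0:ℝ) 1) ⊆ S := by
      rw [hSdef]
      refine prod_mono (fun y hy => ?_) subset_rfl
      have := hy.1
      simp only [mem_Ici]
      linarith
    have hF'S : ContinuousOn
        (fun p : ℝ×ℝ => Real.exp (-(β*p.2)) * (2*(ρ p.1 p.2 - ρs)^1 * gt' p)) S :=
      ((Real.continuous_exp.comp ((continuous_const.mul continuous_snd).neg)).continuousOn).mul
        ((continuousOn_const.mul ((hρc.sub continuousOn_const).pow 1)).mul hgtc)
    obtain ⟨Cb, hCb⟩ := hKc.exists_bound_of_continuousOn (hF'S.mono hKsub)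
    have m1 : ∀ᶠ s in nhds t0, AEStronglyMeasurable (issFn β ρs ρ s) (volume.restrict (Set.uIoc (0:ℝ) 1)) := by
      filter_upwards [Metric.ball_mem_nhds t0 hεpos] with s hs
      exact ((hFncont s (hball s hs).2.le).mono hsubI).aestronglyMeasurable measurableSet_uIoc
    have m2 : IntervalIntegrable (issFn β ρs ρ t0) volume 0 1 := hFint t0 ht0.le
    have m3 : AEStronglyMeasurable
        (fun x => Real.exp (-(β*x)) * (2*(ρ t0 x - ρs)^1 * gt' (t0,x)))
        (volume.restrict (Set.uIoc (0:ℝ) 1)) := by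
      have hc : ContinuousOn
          (fun x => Real.exp (-(β*x)) * (2*(ρ t0 x - ρs)^1 * gt' (t0,x))) (Icc 0 1) :=
        (hexpc.continuousOn).mul
          ((continuousOn_const.mul (((hρsl t0 ht0.le).sub continuousOn_const).pow 1)).mul
            (hgtsl t0 ht0.le))
      exact (hc.mono hsubI).aestronglyMeasurable measurableSet_uIoc
    have m4 : ∀ᵐ x ∂(volume : Measure ℝ), x ∈ Set.uIoc (0:ℝ) 1 → ∀ s ∈ Metric.ball t0 ε,
        ‖Real.exp (-(β*x)) * (2*(ρ s x - ρs)^1 * gt' (s,x))‖ ≤ Cb := by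
      apply ae_of_all
      intro x hx s hs
      exact hCb (s, x) ⟨(hball s hs).1, hsubI hx⟩
    have m5 : ∀ᵐ x ∂(volume : Measure ℝ), x ∈ Set.uIoc (0:ℝ) 1 → ∀ s ∈ Metric.ball t0 ε,
        HasDerivAt (fun s => issFn β ρs ρ s x)
          (Real.exp (-(β*x)) * (2*(ρ s x - ρs)^1 * gt' (s,x))) s := by
      apply ae_of_all
      intro x hx s hs
      have h1 := hslice_t s (hball s hs).2 x (hsubI hx)
      have h2 : HasDerivAt (fun s => (ρ s x - ρs)^2) (2*(ρ s x - ρs)^1 * gt' (s,x)) s := by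
        have h3 := (h1.sub_const ρs).pow 2
        norm_num at h3
        exact h3.congr_deriv (by ring)
      have h4 := h2.const_mul (Real.exp (-(β*x)))
      simp only [hFn]
      exact h4
    have hres := (intervalIntegral.hasDerivAt_integral_of_dominated_loc_of_deriv_le
      (F := fun s x => issFn β ρs ρ s x)
      (F' := fun s x => Real.exp (-(β*x)) * (2*(ρ s x - ρs)^1 * gt' (s,x)))
      (bound := fun _ => Cb) (Metric.ball_mem_nhds t0 hεpos) m1 m2 m3 m4 intervalIntegrable_const m5).2
    exact hres
  have hDVeq : ∀ t > (0:ℝ), DV t = lam t *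
      ((ρ t 0 - ρs)^2 - E*(ρ t 1 - ρs)^2 - β * V t) := by
    intro t ht
    have hae1 : ∀ᵐ (x:ℝ) ∂(volume : Measure ℝ), x ≠ 1 := by
      have h0 : {x : ℝ | ¬ x ≠ 1} = {1} := by ext y; simp
      rw [MeasureTheory.ae_iff, h0]
      exact Real.volume_singleton
    have hstep1 : DV t = ∫ x in (0:ℝ)..1,
        (-(lam t)) * (Real.exp (-(β*x)) * (2*(ρ t x - ρs)^1 * gx' (t,x))) := by
      simp only [hDVdef]
      apply intervalIntegral.integral_congr_ae
      filter_upwards [hae1] with x hx1 hxI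
      have hxIoo : x ∈ Ioo (0:ℝ) 1 := by
        rw [huIoc] at hxI
        exact ⟨hxI.1, lt_of_le_of_ne hxI.2 hx1⟩
      have hp := hpde t ht x hxIoo
      rw [(hslice_t t ht x (Ioo_subset_Icc_self hxIoo)).deriv,
          (hslice_x t ht x hxIoo).deriv] at hp
      have hgg : gt' (t,x) = -(lam t) * gx' (t,x) := by
        simp only [hlam] at hp ⊢
        linarith
      rw [hgg]
      ring
    have hψc : ContinuousOn (fun x => Real.exp (-(β*x)) * (-β) * (ρ t x - ρs)^2
        + Real.exp (-(β*x)) * (2*(ρ t x - ρs)^1 * gx' (t,x))) (Icc 0 1) :=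
      ((hexpc.continuousOn.mul continuousOn_const).mul
        (((hρsl t ht.le).sub continuousOn_const).pow 2)).add
        ((hexpc.continuousOn).mul
          ((continuousOn_const.mul (((hρsl t ht.le).sub continuousOn_const).pow 1)).mul
            (hgxsl t ht.le)))
    have hψint : IntervalIntegrable (fun x => Real.exp (-(β*x)) * (-β) * (ρ t x - ρs)^2
        + Real.exp (-(β*x)) * (2*(ρ t x - ρs)^1 * gx' (t,x))) volume 0 1 :=
      (hψc.mono (le_of_eq huIcc)).intervalIntegrable
    have hFTC : (∫ x in (0:ℝ)..1, (Real.exp (-(β*x)) * (-β) * (ρ t x - ρs)^2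
        + Real.exp (-(β*x)) * (2*(ρ t x - ρs)^1 * gx' (t,x))))
        = issFn β ρs ρ t 1 - issFn β ρs ρ t 0 := by
      apply intervalIntegral.integral_eq_sub_of_hasDeriv_right_of_le zero_le_one
        (hFncont t ht.le) ?_ hψint
      intro x hx
      have hexpd : HasDerivAt (fun y : ℝ => Real.exp (-(β*y))) (Real.exp (-(β*x)) * (-β)) x := by
        have h0 : HasDerivAt (fun y : ℝ => -(β*y)) (-β) x := by
          exact ((hasDerivAt_id' x).const_mul β).neg.congr_deriv (by ring)
        exact h0.exp
      have hsq : HasDerivAt (fun y => (ρ t y - ρs)^2) (2*(ρ t x - ρs)^1*gx' (t,x)) x := by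
        have h3 := ((hslice_x t ht x hx).sub_const ρs).pow 2
        norm_num at h3
        exact h3.congr_deriv (by ring)
      have hmul := hexpd.mul hsq
      have : HasDerivAt (fun y => issFn β ρs ρ t y)
          (Real.exp (-(β*x)) * (-β) * (ρ t x - ρs)^2
            + Real.exp (-(β*x)) * (2*(ρ t x - ρs)^1 * gx' (t,x))) x := by
        simp only [issFn]
        exact hmul
      exact this.hasDerivWithinAt
    have hsplit2 : (∫ x in (0:ℝ)..1, Real.exp (-(β*x)) * (2*(ρ t x - ρs)^1 * gx' (t,x)))
        = (issFn β ρs ρ t 1 - issFn β ρs ρ t 0) + β * V t := by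
      have heq2 : ∀ x : ℝ, Real.exp (-(β*x)) * (2*(ρ t x - ρs)^1 * gx' (t,x))
          = (Real.exp (-(β*x)) * (-β) * (ρ t x - ρs)^2
             + Real.exp (-(β*x)) * (2*(ρ t x - ρs)^1 * gx' (t,x))) + β * issFn β ρs ρ t x := by
        intro x
        rw [hFn]
        ring
      rw [intervalIntegral.integral_congr (fun x _ => heq2 x),
        intervalIntegral.integral_add hψint ((hFint t ht.le).const_mul β),
        hFTC, intervalIntegral.integral_const_mul]
    rw [hstep1, intervalIntegral.integral_const_mul, hsplit2]
    have hF1 : issFn β ρs ρ t 1 = E*(ρ t 1 - ρs)^2 := by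
      rw [hFn, hE]
      norm_num
    have hF0 : issFn β ρs ρ t 0 = (ρ t 0 - ρs)^2 := by
      rw [hFn]
      norm_num
    rw [hF1, hF0]
    ring
  have hu0 : ∀ t > (0:ℝ), ρ t 0 - ρs =
      k*(ρ t 1 - ρs) + ((1-k)*θ*(W t - ρs) + k*d t) := by
    intro t ht
    have h := hbc t ht
    have h1 : B + W t ≠ 0 := (hBW t ht.le).ne'
    have h2 : B + ρs ≠ 0 := hBρ.ne'
    rw [hθ]
    have hA' : A ≠ 0 := hA.ne'
    field_simp at h
    have h4 : (A*(B+ρs)) * ((B+W t) * (ρ t 0*(B+ρs)))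
        = (A*(B+ρs)) * ((B+W t) * ((1-k)*ρs*(B+W t) + k*(ρ t 1+d t)*(B+ρs))) := by
      linear_combination (A*(B+ρs)*(B+W t)) * h
    have key := mul_left_cancel₀ h1 (mul_left_cancel₀ (mul_ne_zero hA' h2) h4)
    field_simp
    linear_combination key
  have hbdineq : ∀ t > (0:ℝ),
      (ρ t 0 - ρs)^2 - E*(ρ t 1 - ρs)^2 ≤ (β - c)*V t + C*(d t)^2 := by
    intro t ht
    rw [hu0 t ht]
    exact aux_bdry E k θ C₁ β sε P c C (ρ t 1 - ρs) (W t - ρs) (d t) (V t)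
      hEpos hkE hspos (hVnn t) (hCS t ht.le)
      (mul_nonneg (sq_nonneg _) (sq_nonneg _))
      (by rw [hPdef, hκdef]) hsplitP (by rw [← hκdef]; exact hCk)
  have hDVle : ∀ t > (0:ℝ), DV t ≤ lam t * (-c * V t + C*(d t)^2) := by
    intro t ht
    rw [hDVeq t ht]
    apply mul_le_mul_of_nonneg_left ?_ (hlampos t ht.le).le
    have h1 := hbdineq t ht
    linarith
  -- stage 1 : uniform bound
  set Vmax := R^2 + C*M^2/c with hVmaxdef
  have hVmaxnn : 0 ≤ Vmax := by
    rw [hVmaxdef]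
    have := div_nonneg (mul_nonneg hCpos.le (sq_nonneg M)) hcpos.le
    nlinarith [sq_nonneg R]
  have hN0nn : 0 ≤ ∫ x in (0:ℝ)..1, (ρ 0 x - ρs)^2 :=
    intervalIntegral.integral_nonneg zero_le_one (fun x _ => by positivity)
  have hVle : ∀ t ∈ Ici (0:ℝ), V t ≤ ∫ x in (0:ℝ)..1, (ρ t x - ρs)^2 := by
    intro t ht
    apply intervalIntegral.integral_mono_on zero_le_one (hFint t ht) (husqint t ht)
    intro x hx
    simp only [hFn]
    have h1 : Real.exp (-(β*x)) ≤ 1 := by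
      rw [Real.exp_le_one_iff]
      have := mul_nonneg hβpos.le hx.1
      linarith
    calc Real.exp (-(β*x)) * (ρ t x - ρs)^2 ≤ 1 * (ρ t x - ρs)^2 :=
          mul_le_mul_of_nonneg_right h1 (sq_nonneg _)
      _ = (ρ t x - ρs)^2 := one_mul _
  have hV0 : V 0 ≤ R^2 := by
    have h1 := hVle 0 (Set.mem_Ici.mpr le_rfl)
    have h2 : (∫ x in (0:ℝ)..1, (ρ 0 x - ρs)^2) ≤ R^2 := by
      rw [← Real.sq_sqrt hN0nn]
      exact pow_le_pow_left₀ (Real.sqrt_nonneg _) hinit 2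
    linarith
  have hdsq : ∀ t, 0 ≤ t → (d t)^2 ≤ M^2 := fun t ht => aux_sq_le_sq _ _ (hMd t ht)
  have hstage1 : ∀ t ≥ (0:ℝ), V t ≤ Vmax := by
    apply aux_barrier V DV hVcont hVderiv Vmax ?_
    · intro t ht hVt
      have h1 := hDVle t ht
      have h4 : -c * V t + C*(d t)^2 ≤ 0 :=
        aux_barrier_cond c C M R (V t) ((d t)^2) hcpos hCpos hMnn (hdsq t ht.le)
          (by rw [← hVmaxdef]; exact hVt)
      have h5 := mul_le_mul_of_nonneg_left h4 (hlampos t ht.le).le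
      rw [mul_zero] at h5
      linarith
    · rw [hVmaxdef]
      have := div_nonneg (mul_nonneg hCpos.le (sq_nonneg M)) hcpos.le
      linarith [hV0]
  -- lower bound on lambda
  set Wub := ρs + Real.sqrt (C₁ * Vmax) with hWubdef
  have hWub : ∀ t ≥ (0:ℝ), W t ≤ Wub := by
    intro t ht
    have h1 := hCS t ht
    have h2 : C₁ * V t ≤ C₁ * Vmax := mul_le_mul_of_nonneg_left (hstage1 t ht) hC₁pos.le
    have h3 : W t - ρs ≤ Real.sqrt (C₁ * Vmax) := by
      calc W t - ρs ≤ |W t - ρs| := le_abs_self _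
        _ = Real.sqrt ((W t - ρs)^2) := (Real.sqrt_sq_eq_abs _).symm
        _ ≤ Real.sqrt (C₁ * Vmax) := Real.sqrt_le_sqrt (by linarith)
    linarith
  set ℓ := A/(B + Wub) with hℓdef
  have hWubnn : 0 ≤ Wub := by
    rw [hWubdef]
    exact add_nonneg hρs (Real.sqrt_nonneg _)
  have hℓpos : 0 < ℓ := by
    rw [hℓdef]
    exact div_pos hA (by linarith)
  have hlamlb : ∀ t ≥ (0:ℝ), ℓ ≤ lam t := by
    intro t ht
    simp only [hℓdef, hlam]
    gcongr
    · exact hBW t ht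
    · exact hWub t ht
  -- final constants
  have hℓc : 0 < ℓ*c := mul_pos hℓpos hcpos
  refine ⟨ℓ*c/2, by linarith, Real.exp (β/2), Real.exp_pos _,
    Real.exp (β/2) * (Real.sqrt ((A/B)*C/(ℓ*c)) + 1),
    mul_pos (Real.exp_pos _) (by positivity), ?_⟩
  intro t ht
  set Mt := sSup ((fun s => |d s|) '' Icc (0:ℝ) t) with hMtdef
  have hMtbdd : BddAbove ((fun s => |d s|) '' Icc (0:ℝ) t) := by
    refine ⟨M, ?_⟩
    rintro y ⟨s, hs, rfl⟩
    exact hMd s hs.1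
  have hMtge : ∀ s ∈ Icc (0:ℝ) t, |d s| ≤ Mt := fun s hs => le_csSup hMtbdd ⟨s, hs, rfl⟩
  have hMt0 : 0 ≤ Mt := (abs_nonneg (d 0)).trans (hMtge 0 ⟨le_refl 0, ht⟩)
  set Kc := (A/B)*C*Mt^2/(ℓ*c) with hKcdef
  have hKc0 : 0 ≤ Kc := by
    rw [hKcdef]
    exact div_nonneg (mul_nonneg (mul_nonneg (div_nonneg hA.le hB.le) hCpos.le) (sq_nonneg Mt))
      hℓc.le
  have hgron : V t ≤ V 0 * Real.exp (-(ℓ*c*t)) + Kc := by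
    apply aux_gronwall V DV (ℓ*c) Kc t hℓc hKc0 ht
      (hVcont.mono (Icc_subset_Ici_self)) (fun s hs1 _ => hVderiv s hs1)
    intro s hs1 hs2
    have h1 := hDVle s hs1
    have hcV : -c * V s ≤ 0 := by
      have := mul_nonneg hcpos.le (hVnn s)
      linarith
    have h2 : lam s * (-c * V s) ≤ ℓ * (-c * V s) :=
      mul_le_mul_of_nonpos_right (hlamlb s hs1.le) hcV
    have h3 : lam s * (C*(d s)^2) ≤ (A/B) * (C*Mt^2) := by
      apply mul_le_mul (hlamle s hs1.le) ?_ (mul_nonneg hCpos.le (sq_nonneg _))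
        (div_nonneg hA.le hB.le)
      exact mul_le_mul_of_nonneg_left (aux_sq_le_sq _ _ (hMtge s ⟨hs1.le, hs2.le⟩)) hCpos.le
    have h4 : ℓ*c*Kc = (A/B)*(C*Mt^2) := by
      rw [hKcdef, mul_div_assoc']
      rw [mul_comm (ℓ*c) ((A/B)*C*Mt^2), mul_div_assoc, div_self hℓc.ne', mul_one]
      ring
    have h5 : lam s * (-c * V s + C*(d s)^2) = lam s * (-c * V s) + lam s * (C*(d s)^2) := by
      ring
    linarith
  -- final chain
  have hNt : (∫ x in (0:ℝ)..1, (ρ t x - ρs)^2) ≤ Real.exp β * V t := by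
    have hpt : ∀ x ∈ Icc (0:ℝ) 1, (ρ t x - ρs)^2 ≤ Real.exp β * issFn β ρs ρ t x := by
      intro x hx
      rw [hFn]
      have h1 : Real.exp β * Real.exp (-(β*x)) = Real.exp (β - β*x) := by
        rw [← Real.exp_add]; ring_nf
      have h2 : 1 ≤ Real.exp (β - β*x) := by
        rw [show (1:ℝ) = Real.exp 0 by simp]
        apply Real.exp_le_exp.mpr
        have h3 := mul_nonneg hβpos.le (sub_nonneg.mpr hx.2)
        have h4 : β*(1-x) = β - β*x := by ring
        linarith [h4 ▸ h3]
      calc (ρ t x - ρs)^2 = 1 * (ρ t x - ρs)^2 := (one_mul _).symm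
        _ ≤ Real.exp (β - β*x) * (ρ t x - ρs)^2 := mul_le_mul_of_nonneg_right h2 (sq_nonneg _)
        _ = Real.exp β * (Real.exp (-(β*x)) * (ρ t x - ρs)^2) := by rw [← h1]; ring
    have h0 := intervalIntegral.integral_mono_on zero_le_one (husqint t ht)
      ((hFint t ht).const_mul (Real.exp β)) hpt
    rw [intervalIntegral.integral_const_mul] at h0
    simpa only [hVdef] using h0
  have hsqrt1 : Real.sqrt (∫ x in (0:ℝ)..1, (ρ t x - ρs)^2)
      ≤ Real.exp (β/2) * Real.sqrt (V t) := by
    calc Real.sqrt (∫ x in (0:ℝ)..1, (ρ t x - ρs)^2) ≤ Real.sqrt (Real.exp β * V t) :=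
          Real.sqrt_le_sqrt hNt
      _ = Real.sqrt (Real.exp β) * Real.sqrt (V t) := Real.sqrt_mul (Real.exp_nonneg _) _
      _ = Real.exp (β/2) * Real.sqrt (V t) := by
          rw [show Real.exp β = Real.exp (β/2) * Real.exp (β/2) by
            rw [← Real.exp_add]; ring_nf, Real.sqrt_mul_self (Real.exp_nonneg _)]
  have hsqrt2 : Real.sqrt (V t) ≤ Real.exp (-(ℓ*c/2) * t) * Real.sqrt (V 0)
      + Real.sqrt ((A/B)*C/(ℓ*c)) * Mt := by
    have h2 : Real.sqrt (V t) ≤ Real.sqrt (V 0 * Real.exp (-(ℓ*c*t))) + Real.sqrt Kc :=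
      (Real.sqrt_le_sqrt hgron).trans
        (aux_sqrt_add _ _ (mul_nonneg (hVnn 0) (Real.exp_pos _).le) hKc0)
    have h3 : Real.sqrt (V 0 * Real.exp (-(ℓ*c*t)))
        = Real.exp (-(ℓ*c/2) * t) * Real.sqrt (V 0) := by
      rw [Real.sqrt_mul (hVnn 0),
        show Real.exp (-(ℓ*c*t)) = Real.exp (-(ℓ*c/2)*t) * Real.exp (-(ℓ*c/2)*t) by
          rw [← Real.exp_add]; ring_nf,
        Real.sqrt_mul_self (Real.exp_nonneg _)]
      ring
    have h4 : Real.sqrt Kc = Real.sqrt ((A/B)*C/(ℓ*c)) * Mt := by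
      rw [hKcdef, show (A/B)*C*Mt^2/(ℓ*c) = ((A/B)*C/(ℓ*c)) * Mt^2 by ring,
        Real.sqrt_mul (div_nonneg (mul_nonneg (div_nonneg hA.le hB.le) hCpos.le) hℓc.le),
        Real.sqrt_sq hMt0]
    rw [h3, h4] at h2
    exact h2
  have hsqrt0 : Real.sqrt (V 0) ≤ Real.sqrt (∫ x in (0:ℝ)..1, (ρ 0 x - ρs)^2) :=
    Real.sqrt_le_sqrt (hVle 0 (Set.mem_Ici.mpr le_rfl))
  have e0 : (0:ℝ) ≤ Real.exp (β/2) := (Real.exp_pos _).le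
  have e1 : (0:ℝ) ≤ Real.exp (-(ℓ*c/2) * t) := (Real.exp_pos _).le
  calc Real.sqrt (∫ x in (0:ℝ)..1, (ρ t x - ρs)^2)
      ≤ Real.exp (β/2) * Real.sqrt (V t) := hsqrt1
    _ ≤ Real.exp (β/2) * (Real.exp (-(ℓ*c/2) * t) * Real.sqrt (V 0)
        + Real.sqrt ((A/B)*C/(ℓ*c)) * Mt) := mul_le_mul_of_nonneg_left hsqrt2 e0
    _ = Real.exp (β/2) * Real.exp (-(ℓ*c/2) * t) * Real.sqrt (V 0)
        + Real.exp (β/2) * Real.sqrt ((A/B)*C/(ℓ*c)) * Mt := by ring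
    _ ≤ Real.exp (β/2) * Real.exp (-(ℓ*c/2) * t)
          * Real.sqrt (∫ x in (0:ℝ)..1, (ρ 0 x - ρs)^2)
        + Real.exp (β/2) * (Real.sqrt ((A/B)*C/(ℓ*c)) + 1) * Mt := by
        have t1 : Real.exp (β/2) * Real.exp (-(ℓ*c/2) * t) * Real.sqrt (V 0)
            ≤ Real.exp (β/2) * Real.exp (-(ℓ*c/2) * t)
              * Real.sqrt (∫ x in (0:ℝ)..1, (ρ 0 x - ρs)^2) :=
          mul_le_mul_of_nonneg_left hsqrt0 (mul_nonneg e0 e1)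
        have t2 : Real.exp (β/2) * Real.sqrt ((A/B)*C/(ℓ*c)) * Mt
            ≤ Real.exp (β/2) * (Real.sqrt ((A/B)*C/(ℓ*c)) + 1) * Mt := by
          apply mul_le_mul_of_nonneg_right ?_ hMt0
          have h5 : Real.sqrt ((A/B)*C/(ℓ*c)) ≤ Real.sqrt ((A/B)*C/(ℓ*c)) + 1 := by linarith
          exact mul_le_mul_of_nonneg_left h5 e0
        linarith
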